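/- If (Q,·) is a pentagonal quasigroup, then there exists an Abelian group (Q,+) and a regular automorphism φ with x·y = φ(x) + y − φ(y), such that either φ⁵ = −id and φ ≠ −id, or φ = −id and the group (Q,+) has exponent 5. -/
import Mathlib


/-- A pentagonal quasigroup: a quasigroup (unique left/right division)
satisfying idempotency, mediality and the pentagonal identity. -/
def IsPentagonal {Q : Type*} (m : Q → Q → Q) : Prop :=
  (∀ a b : Q, ∃! x, m a x = b) ∧
  (∀ a b : Q, ∃! x, m x a = b) ∧
  (∀ x, m x x = x) ∧
  (∀ x y z u, m (m x y) (m z u) = m (m x z) (m y u)) ∧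
  (∀ x y, m (m (m (m x y) x) y) x = y)

namespace PentAux

variable {Q : Type*} {m : Q → Q → Q}

theorem left_cancel (h : IsPentagonal m) {a x y : Q} (hxy : m a x = m a y) : x = y := by
  obtain ⟨w, -, hu⟩ := h.1 a (m a y)
  rw [hu x hxy, hu y rfl]

theorem right_cancel (h : IsPentagonal m) {a x y : Q} (hxy : m x a = m y a) : x = y := by
  obtain ⟨w, -, hu⟩ := h.2.1 a (m y a)
  rw [hu x hxy, hu y rfl]

theorem idem (h : IsPentagonal m) (x : Q) : m x x = x := h.2.2.1 x

theorem medial (h : IsPentagonal m) (x y z u : Q) :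
    m (m x y) (m z u) = m (m x z) (m y u) := h.2.2.2.1 x y z u

/-- left division: `m a (ld h a b) = b`. -/
noncomputable def ld (h : IsPentagonal m) (a b : Q) : Q := (h.1 a b).exists.choose

theorem ld_spec (h : IsPentagonal m) (a b : Q) : m a (ld h a b) = b :=
  (h.1 a b).exists.choose_spec

/-- right division: `m (rd h a b) b = a`. -/
noncomputable def rd (h : IsPentagonal m) (a b : Q) : Q := (h.2.1 b a).exists.choose

theorem rd_spec (h : IsPentagonal m) (a b : Q) : m (rd h a b) b = a :=
  (h.2.1 b a).exists.choose_spec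

theorem ld_of (h : IsPentagonal m) (a x : Q) : ld h a (m a x) = x :=
  left_cancel h (ld_spec h a (m a x))

theorem rd_of (h : IsPentagonal m) (a x : Q) : rd h (m x a) a = x :=
  right_cancel h (rd_spec h (m x a) a)

/-- ρλ = λρ : `m (m e x) e = m e (m x e)` -/
theorem rho_lam_comm (h : IsPentagonal m) (e x : Q) : m (m e x) e = m e (m x e) := by
  calc m (m e x) e = m (m e x) (m e e) := by rw [idem h]
    _ = m (m e e) (m x e) := medial h e x e e
    _ = m e (m x e) := by rw [idem h]

/-- ρ is an endomorphism of m. -/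
theorem rho_hom (h : IsPentagonal m) (e x y : Q) : m (m x y) e = m (m x e) (m y e) := by
  calc m (m x y) e = m (m x y) (m e e) := by rw [idem h]
    _ = m (m x e) (m y e) := medial h x y e e

/-- λ is an endomorphism of m. -/
theorem lam_hom (h : IsPentagonal m) (e x y : Q) : m e (m x y) = m (m e x) (m e y) := by
  calc m e (m x y) = m (m e e) (m x y) := by rw [idem h]
    _ = m (m e x) (m e y) := medial h e e x y

theorem rd_hom (h : IsPentagonal m) (e x y : Q) :
    rd h (m x y) e = m (rd h x e) (rd h y e) := by
  apply right_cancel h (a := e)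
  rw [rd_spec h, rho_hom h, rd_spec h, rd_spec h]

theorem ld_hom (h : IsPentagonal m) (e x y : Q) :
    ld h e (m x y) = m (ld h e x) (ld h e y) := by
  apply left_cancel h (a := e)
  rw [ld_spec h, lam_hom h, ld_spec h, ld_spec h]

/-- ρ λ⁻¹ = λ⁻¹ ρ -/
theorem rho_ld (h : IsPentagonal m) (e x : Q) : m (ld h e x) e = ld h e (m x e) := by
  apply left_cancel h (a := e)
  rw [← rho_lam_comm h, ld_spec h, ld_spec h]

/-- λ ρ⁻¹ = ρ⁻¹ λ -/
theorem lam_rd (h : IsPentagonal m) (e x : Q) : m e (rd h x e) = rd h (m e x) e := by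
  apply right_cancel h (a := e)
  rw [rd_spec h, rho_lam_comm h, rd_spec h]

/-- ρ⁻¹ λ⁻¹ = λ⁻¹ ρ⁻¹ -/
theorem rd_ld (h : IsPentagonal m) (e x : Q) :
    rd h (ld h e x) e = ld h e (rd h x e) := by
  apply left_cancel h (a := e)
  rw [lam_rd h, ld_spec h, ld_spec h]

/-- The group addition. -/
noncomputable def add (h : IsPentagonal m) (e a b : Q) : Q := m (rd h a e) (ld h e b)

noncomputable def neg (h : IsPentagonal m) (e a : Q) : Q := m e (ld h (rd h a e) e)

theorem rd_e (h : IsPentagonal m) (e : Q) : rd h e e = e := by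
  apply right_cancel h (a := e)
  rw [rd_spec h, idem h]

theorem ld_e (h : IsPentagonal m) (e : Q) : ld h e e = e := by
  apply left_cancel h (a := e)
  rw [ld_spec h, idem h]

theorem zero_add (h : IsPentagonal m) (e b : Q) : add h e e b = b := by
  rw [add, rd_e h, ld_spec h]

theorem add_zero (h : IsPentagonal m) (e a : Q) : add h e a e = a := by
  rw [add, ld_e h, rd_spec h]

theorem star (h : IsPentagonal m) (e x y : Q) : add h e (m x e) (m e y) = m x y := by
  rw [add, rd_of h, ld_of h]

theorem add_medial (h : IsPentagonal m) (e a b c d : Q) :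
    add h e (add h e a b) (add h e c d) = add h e (add h e a c) (add h e b d) := by
  simp only [add, rd_hom h, ld_hom h]
  rw [medial h, rd_ld h e c, rd_ld h e b]

theorem add_comm (h : IsPentagonal m) (e a b : Q) : add h e a b = add h e b a := by
  have := add_medial h e e a b e
  rwa [zero_add h, add_zero h, zero_add h, add_zero h] at this

theorem add_assoc (h : IsPentagonal m) (e a b c : Q) :
    add h e (add h e a b) c = add h e a (add h e b c) := by
  have := add_medial h e a b e c
  rwa [add_zero h, zero_add h] at this

theorem add_neg (h : IsPentagonal m) (e a : Q) : add h e a (neg h e a) = e := by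
  rw [add, neg, ld_of h, ld_spec h]

theorem rho_add (h : IsPentagonal m) (e a b : Q) :
    m (add h e a b) e = add h e (m a e) (m b e) := by
  show m (m (rd h a e) (ld h e b)) e = _
  rw [rho_hom h, rd_spec h, rho_ld h, add, rd_of h]

end PentAux

theorem pentagonal_phi_pow_five (Q : Type*) [Nonempty Q] (m : Q → Q → Q)
    (h : IsPentagonal m) :
    ∃ (_ : AddCommGroup Q) (φ : Q →+ Q),
      Function.Bijective φ ∧
      (∀ x : Q, φ x = x → x = 0) ∧
      (∀ x y : Q, m x y = φ x + y - φ y) ∧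
      (((∀ x : Q, φ (φ (φ (φ (φ x)))) = -x) ∧ ¬ (∀ x : Q, φ x = -x)) ∨
        ((∀ x : Q, φ x = -x) ∧ (∀ x : Q, (5 : ℕ) • x = 0))) := by
  classical
  obtain ⟨e⟩ : Nonempty Q := inferInstance
  letI : Zero Q := ⟨e⟩
  letI : Add Q := ⟨PentAux.add h e⟩
  letI : Neg Q := ⟨PentAux.neg h e⟩
  letI G : AddCommGroup Q :=
    { add := (· + ·)
      zero := (0 : Q)
      neg := (- ·)
      nsmul := nsmulRec
      zsmul := zsmulRec
      add_assoc := PentAux.add_assoc h e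
      zero_add := PentAux.zero_add h e
      add_zero := PentAux.add_zero h e
      neg_add_cancel := fun a =>
        (PentAux.add_comm h e (PentAux.neg h e a) a).trans (PentAux.add_neg h e a)
      add_comm := PentAux.add_comm h e }
  have hadd : ∀ a b : Q, a + b = PentAux.add h e a b := fun _ _ => rfl
  have hzero : (0 : Q) = e := rfl
  set φ : Q →+ Q :=
    { toFun := fun x => m x e
      map_zero' := PentAux.idem h e
      map_add' := fun a b => by
        simp only [hadd]; exact PentAux.rho_add h e a b } with hφ
  have hφx : ∀ x : Q, φ x = m x e := fun _ => rfl
  -- the key formula  m x y = φ x + y - φ y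
  have hstar : ∀ x y : Q, m x e + m e y = m x y := by
    intro x y; rw [hadd]; exact PentAux.star h e x y
  have hsplit : ∀ y : Q, m y e + m e y = y := by
    intro y; rw [hstar, PentAux.idem h]
  have hform : ∀ x y : Q, m x y = φ x + y - φ y := by
    intro x y
    have h1 : m e y = y - φ y := by
      rw [eq_sub_iff_add_eq, _root_.add_comm, hφx, hsplit]
    rw [← hstar, h1]
    simp only [hφx]
    rw [add_sub_assoc]
  refine ⟨G, φ, ?_, ?_, hform, ?_⟩
  · refine ⟨fun a b hab => PentAux.right_cancel h hab, fun b => ⟨PentAux.rd h b e, ?_⟩⟩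
    show m (PentAux.rd h b e) e = b
    exact PentAux.rd_spec h b e
  · intro x hx
    rw [hφx] at hx
    show x = e
    exact (PentAux.left_cancel h (a := x) (by rw [hx, PentAux.idem h])).symm
  · -- pentagonal identity gives φ⁴ - φ³ + φ² - φ + 1 = 0
    have hP : ∀ x : Q, φ (φ (φ (φ x))) - φ (φ (φ x)) + φ (φ x) - φ x + x = 0 := by
      intro x
      have hp := h.2.2.2.2 x e
      simp only [hform] at hp
      rw [← hzero] at hp
      simp only [map_add, map_sub, map_zero, _root_.add_zero, _root_.sub_zero,
        _root_.zero_sub, _root_.zero_add] at hp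
      abel_nf at hp ⊢
      exact hp
    have hP5 : ∀ x : Q, φ (φ (φ (φ (φ x)))) = -x := by
      intro x
      have h1 := hP x
      have h2 := congrArg φ h1
      simp only [map_add, map_sub, map_zero] at h2
      have h3 : φ (φ (φ (φ (φ x)))) + x =
          (φ (φ (φ (φ (φ x)))) - φ (φ (φ (φ x))) + φ (φ (φ x)) - φ (φ x) + φ x) +
          (φ (φ (φ (φ x))) - φ (φ (φ x)) + φ (φ x) - φ x + x) := by abel
      rw [h2, h1, _root_.add_zero] at h3
      exact eq_neg_of_add_eq_zero_left h3
    by_cases hneg : ∀ x : Q, φ x = -x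
    · refine Or.inr ⟨hneg, fun x => ?_⟩
      have h1 := hP x
      simp only [hneg, neg_neg] at h1
      rw [show ((5 : ℕ) • x : Q) = x - -x + x - -x + x by abel]
      simpa using h1
    · exact Or.inl ⟨hP5, hneg⟩
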